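/- Let λ, μ ∈ ℝ with λ + μ ≠ 0 and γ = 1 + μ/(λ + μ). The second Fréchet derivative of the Neo-Hookean energy density Ψ at the identity matrix I, applied to directions H, K ∈ Matrix (Fin 3) (Fin 3) ℝ, equals B(H, K) = μ·tr(Hᵀ K) + λ·tr(H)·tr(K) + μ·tr(H K). -/

import Mathlib

open Matrix

attribute [local instance] Matrix.normedAddCommGroup Matrix.normedSpace

/-- Neo-Hookean strain energy density with Lamé parameters `lam`, `mu`,
`γ = 1 + mu / (lam + mu)` and constant offset `E0`. -/
noncomputable def neoHookean (lam mu E0 : ℝ) (F : Matrix (Fin 3) (Fin 3) ℝ) : ℝ :=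
  (1 / 2) * ((lam + mu) * (F.det - (1 + mu / (lam + mu))) ^ 2 + mu * (Fᵀ * F).trace - E0)

/-- Auxiliary abbreviation for the space of 3×3 real matrices. -/
abbrev M3 := Matrix (Fin 3) (Fin 3) ℝ

section

/-- The norm topology on `M3`, so that `M3 →L[ℝ] ℝ` agrees with the type produced by `fderiv`. -/
@[reducible] noncomputable def M3top : TopologicalSpace M3 :=
  (Matrix.normedAddCommGroup : NormedAddCommGroup M3).toUniformSpace.toTopologicalSpace

attribute [local instance high] M3top

/-- Continuous linear functionals on `M3`, for the norm topology. -/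
abbrev M3D := M3 →L[ℝ] ℝ

/-- Continuous linear maps `M3 → M3D`, for the norm topology. -/
abbrev M3DD := M3 →L[ℝ] M3D

end

/-- The continuous linear map extracting the `(i, j)` entry. -/
noncomputable def eL (i j : Fin 3) : M3D :=
  LinearMap.toContinuousLinearMap
    { toFun := fun F => F i j, map_add' := fun _ _ => rfl, map_smul' := fun _ _ => rfl }

@[simp] lemma eL_apply (i j : Fin 3) (F : M3) : eL i j F = F i j := rfl

lemma hE (i j : Fin 3) (F : M3) :
    HasFDerivAt (fun F : M3 => F i j) (eL i j) F := (eL i j).hasFDerivAt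

/-- The continuous linear map `K ↦ ∑ i j, A i j * K i j`. -/
noncomputable def dotL (A : M3) : M3D := ∑ i, ∑ j, A i j • eL i j

@[simp] lemma dotL_apply (A F : M3) : dotL A F = ∑ i, ∑ j, A i j * F i j := by
  simp [dotL]

/-- `dotL` as a continuous linear map in its first argument. -/
noncomputable def dotL2 : M3DD :=
  LinearMap.toContinuousLinearMap
    { toFun := dotL,
      map_add' := by intro A B; ext K; simp [add_mul, Finset.sum_add_distrib]
      map_smul' := by intro c A; ext K; simp [Finset.mul_sum, mul_assoc] }

@[simp] lemma dotL2_apply (A : M3) : dotL2 A = dotL A := rfl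

/-- Fréchet derivative of the determinant on 3×3 matrices. -/
lemma hasFDerivAt_det3 (F : M3) :
    HasFDerivAt (fun F : M3 => F.det) (dotL (adjugate F)ᵀ) F := by
  have e : (fun F : M3 => F.det)
      = fun F : M3 => F 0 0 * F 1 1 * F 2 2 - F 0 0 * F 1 2 * F 2 1
        - F 0 1 * F 1 0 * F 2 2 + F 0 1 * F 1 2 * F 2 0
        + F 0 2 * F 1 0 * F 2 1 - F 0 2 * F 1 1 * F 2 0 :=
    funext fun A => det_fin_three A
  rw [e]
  refine HasFDerivAt.congr_fderiv
    ((((((((hE 0 0 F).mul (hE 1 1 F)).mul (hE 2 2 F)).sub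
      (((hE 0 0 F).mul (hE 1 2 F)).mul (hE 2 1 F))).sub
      (((hE 0 1 F).mul (hE 1 0 F)).mul (hE 2 2 F))).add
      (((hE 0 1 F).mul (hE 1 2 F)).mul (hE 2 0 F))).add
      (((hE 0 2 F).mul (hE 1 0 F)).mul (hE 2 1 F))).sub
      (((hE 0 2 F).mul (hE 1 1 F)).mul (hE 2 0 F))) ?_
  ext K
  simp [dotL, adjugate_fin_three, Fin.sum_univ_three]
  ring

/-- First Fréchet derivative of the Neo-Hookean energy density. -/
lemma hasFDerivAt_psi (lam mu E0 : ℝ) (F : M3) :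
    HasFDerivAt (neoHookean lam mu E0)
      (((lam + mu) * (F.det - (1 + mu / (lam + mu)))) • dotL (adjugate F)ᵀ + mu • dotL F) F := by
  have e : neoHookean lam mu E0 = fun F : M3 =>
      (1/2) * ((lam + mu) * ((F.det - (1 + mu / (lam + mu))) * (F.det - (1 + mu / (lam + mu))))
        + mu * (F 0 0 * F 0 0 + F 1 0 * F 1 0 + F 2 0 * F 2 0 + F 0 1 * F 0 1 + F 1 1 * F 1 1
          + F 2 1 * F 2 1 + F 0 2 * F 0 2 + F 1 2 * F 1 2 + F 2 2 * F 2 2) - E0) := by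
    funext F
    simp [neoHookean, Matrix.trace_fin_three, Matrix.mul_apply, Fin.sum_univ_three,
      Matrix.transpose_apply]
    ring
  rw [e]
  refine HasFDerivAt.congr_fderiv
    (((((((hasFDerivAt_det3 F).sub_const _).mul ((hasFDerivAt_det3 F).sub_const _)).const_mul
        (lam + mu)).add
      (((((((((((hE 0 0 F).mul (hE 0 0 F)).add ((hE 1 0 F).mul (hE 1 0 F))).add
        ((hE 2 0 F).mul (hE 2 0 F))).add ((hE 0 1 F).mul (hE 0 1 F))).add
        ((hE 1 1 F).mul (hE 1 1 F))).add ((hE 2 1 F).mul (hE 2 1 F))).add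
        ((hE 0 2 F).mul (hE 0 2 F))).add ((hE 1 2 F).mul (hE 1 2 F))).add
        ((hE 2 2 F).mul (hE 2 2 F))).const_mul mu)).sub_const E0).const_mul (1/2)) ?_
  ext K
  simp [dotL, Fin.sum_univ_three]
  ring

set_option maxHeartbeats 2000000 in
/-- The second Fréchet derivative of the Neo-Hookean energy at the identity equals
the bilinear form `B(H, K) = μ tr(Hᵀ K) + λ tr(H) tr(K) + μ tr(H K)`. -/
theorem neoHookean_second_fderiv_one (lam mu E0 : ℝ) (hlm : lam + mu ≠ 0) :
    ∀ H K : Matrix (Fin 3) (Fin 3) ℝ,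
      fderiv ℝ (fderiv ℝ (neoHookean lam mu E0)) (1 : Matrix (Fin 3) (Fin 3) ℝ) H K =
        mu * (Hᵀ * K).trace + lam * H.trace * K.trace + mu * (H * K).trace := by
  intro H K
  have hP : fderiv ℝ (neoHookean lam mu E0) = fun F : M3 =>
      ((lam + mu) * (F.det - (1 + mu / (lam + mu)))) • dotL (adjugate F)ᵀ + mu • dotL F :=
    funext fun F => (hasFDerivAt_psi lam mu E0 F).fderiv
  have e9 : (fun F : M3 => dotL (adjugate F)ᵀ) = fun F : M3 =>
      (F 1 1 * F 2 2 - F 1 2 * F 2 1) • eL 0 0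
      + (-(F 1 0 * F 2 2) + F 1 2 * F 2 0) • eL 0 1
      + (F 1 0 * F 2 1 - F 1 1 * F 2 0) • eL 0 2
      + (-(F 0 1 * F 2 2) + F 0 2 * F 2 1) • eL 1 0
      + (F 0 0 * F 2 2 - F 0 2 * F 2 0) • eL 1 1
      + (-(F 0 0 * F 2 1) + F 0 1 * F 2 0) • eL 1 2
      + (F 0 1 * F 1 2 - F 0 2 * F 1 1) • eL 2 0
      + (-(F 0 0 * F 1 2) + F 0 2 * F 1 0) • eL 2 1
      + (F 0 0 * F 1 1 - F 0 1 * F 1 0) • eL 2 2 := by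
    funext F; ext K
    simp [dotL, adjugate_fin_three, Fin.sum_univ_three]
    ring
  have t1 := (((hE 1 1 1).mul (hE 2 2 1)).sub ((hE 1 2 1).mul (hE 2 1 1))).smul_const (eL 0 0)
  have t2 := ((((hE 1 0 1).mul (hE 2 2 1)).neg).add ((hE 1 2 1).mul (hE 2 0 1))).smul_const (eL 0 1)
  have t3 := (((hE 1 0 1).mul (hE 2 1 1)).sub ((hE 1 1 1).mul (hE 2 0 1))).smul_const (eL 0 2)
  have t4 := ((((hE 0 1 1).mul (hE 2 2 1)).neg).add ((hE 0 2 1).mul (hE 2 1 1))).smul_const (eL 1 0)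
  have t5 := (((hE 0 0 1).mul (hE 2 2 1)).sub ((hE 0 2 1).mul (hE 2 0 1))).smul_const (eL 1 1)
  have t6 := ((((hE 0 0 1).mul (hE 2 1 1)).neg).add ((hE 0 1 1).mul (hE 2 0 1))).smul_const (eL 1 2)
  have t7 := (((hE 0 1 1).mul (hE 1 2 1)).sub ((hE 0 2 1).mul (hE 1 1 1))).smul_const (eL 2 0)
  have t8 := ((((hE 0 0 1).mul (hE 1 2 1)).neg).add ((hE 0 2 1).mul (hE 1 0 1))).smul_const (eL 2 1)
  have t9 := (((hE 0 0 1).mul (hE 1 1 1)).sub ((hE 0 1 1).mul (hE 1 0 1))).smul_const (eL 2 2)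
  have hadj := ((((((((t1.add t2).add t3).add t4).add t5).add t6).add t7).add t8).add
    t9).congr_of_eventuallyEq (Filter.EventuallyEq.of_eq e9)
  have hc := ((hasFDerivAt_det3 1).sub_const (1 + mu / (lam + mu))).const_mul (lam + mu)
  have hL2 : HasFDerivAt (fun F : M3 => mu • dotL F) (mu • dotL2) 1 :=
    dotL2.hasFDerivAt.const_smul mu
  have hM := (hc.smul hadj).add hL2
  have h2 : fderiv ℝ (fun F : M3 =>
      ((lam + mu) * (F.det - (1 + mu / (lam + mu)))) • dotL (adjugate F)ᵀ + mu • dotL F) 1 = _ :=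
    hM.fderiv
  rw [hP]
  refine (congrArg (fun f : M3DD => f H K) h2).trans ?_
  simp [dotL, Fin.sum_univ_three, Matrix.one_apply, Matrix.trace_fin_three, Matrix.mul_apply,
    Matrix.transpose_apply]
  field_simp
  ring
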